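/- Let $n$ be even and let $S \subseteq \mathbb{Z}^3$ be the subgroup generated by the rows of $\begin{pmatrix} 1 & 0 & 0 \\ 2 & 0 & 0 \\ 0 & 1 & n+1 \\ 0 & 0 & 2n+2 \end{pmatrix}$ scaled by $N = \tfrac{n(n-1)}{2}(n-2)!$, and let $\mu = (1,0,0)$, $\nu = (0,0,n-1)$ scaled by $(n-2)!$. For an integer $k$, the subgroup of $\mathbb{Z}^3/S$ generated by the images of $k(n-2)!\mu'$ and $k(n-2)!\nu'$ (where $\mu' = (1,0,0)$, $\nu' = (0,0,n-1)$) has order $\frac{\frac{1}{2}n(n-1)}{\gcd(\frac{1}{2}n(n-1), k)} \cdot \frac{n(n+1)}{\gcd(n(n+1), k)}$. -/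
import Mathlib

open Submodule

section aux

variable {A B : Type*} [AddCommGroup A] [AddCommGroup B] [Module ℤ A] [Module ℤ B]

lemma card_span_singleton' (x : A) :
    Nat.card (span ℤ ({x} : Set A)) = addOrderOf x := by
  have h : (span ℤ ({x} : Set A) : Set A) = (AddSubgroup.zmultiples x : Set A) := by
    ext z
    rw [SetLike.mem_coe, SetLike.mem_coe, mem_span_singleton, AddSubgroup.mem_zmultiples_iff]
    exact exists_congr fun c => by rw [← Int.cast_smul_eq_zsmul ℤ c x, Int.cast_id]
  rw [← Nat.card_zmultiples x]
  exact Nat.card_congr (Equiv.setCongr h)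

lemma card_span_pair' (x : A) (y : B) :
    Nat.card (span ℤ ({(x, 0), (0, y)} : Set (A × B))) = addOrderOf x * addOrderOf y := by
  have hmem : ∀ z : A × B, (z ∈ span ℤ ({(x, 0), (0, y)} : Set (A × B))) ↔
      z.1 ∈ span ℤ ({x} : Set A) ∧ z.2 ∈ span ℤ ({y} : Set B) := by
    intro z
    rw [span_insert, Submodule.mem_sup]
    constructor
    · rintro ⟨u, hu, v, hv, rfl⟩
      rw [mem_span_singleton] at hu
      rw [mem_span_singleton] at hv
      obtain ⟨c, rfl⟩ := hu
      obtain ⟨d, rfl⟩ := hv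
      constructor
      · rw [mem_span_singleton]
        exact ⟨c, by simp [← Int.cast_smul_eq_zsmul ℤ]⟩
      · rw [mem_span_singleton]
        exact ⟨d, by simp [← Int.cast_smul_eq_zsmul ℤ]⟩
    · rintro ⟨h1, h2⟩
      rw [mem_span_singleton] at h1
      rw [mem_span_singleton] at h2
      obtain ⟨c, hc⟩ := h1
      obtain ⟨d, hd⟩ := h2
      refine ⟨c • ((x, 0) : A × B), mem_span_singleton.mpr ⟨c, rfl⟩,
        d • ((0, y) : A × B), mem_span_singleton.mpr ⟨d, rfl⟩, ?_⟩
      have : z = (z.1, z.2) := rfl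
      rw [this, ← hc, ← hd]
      refine Prod.ext ?_ ?_ <;> simp [← Int.cast_smul_eq_zsmul ℤ]
  rw [← card_span_singleton' x, ← card_span_singleton' y, ← Nat.card_prod]
  exact Nat.card_congr
    ⟨fun z => (⟨z.val.1, ((hmem z.val).mp z.prop).1⟩, ⟨z.val.2, ((hmem z.val).mp z.prop).2⟩),
     fun p => ⟨(p.1.val, p.2.val), (hmem _).mpr ⟨p.1.prop, p.2.prop⟩⟩,
     fun z => rfl, fun p => rfl⟩

lemma addOrderOf_intCast_zmod (N : ℕ) (hN : N ≠ 0) (m : ℤ) :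
    addOrderOf ((m : ZMod N)) = N / N.gcd m.natAbs := by
  rcases Int.natAbs_eq m with h | h
  · conv_lhs => rw [h, Int.cast_natCast]
    rw [ZMod.addOrderOf_coe _ hN]
  · conv_lhs => rw [h, Int.cast_neg, Int.cast_natCast]
    rw [addOrderOf_neg, ZMod.addOrderOf_coe _ hN]

def phi3 (a b : ℕ) (t : ℤ) : (Fin 3 → ℤ) →ₗ[ℤ] ZMod a × ZMod a × ZMod b where
  toFun v := (((v 0 : ℤ) : ZMod a), ((v 1 : ℤ) : ZMod a), ((v 2 - t * v 1 : ℤ) : ZMod b))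
  map_add' u v := by
    refine Prod.ext ?_ (Prod.ext ?_ ?_) <;> simp <;> push_cast <;> ring
  map_smul' c v := by
    refine Prod.ext ?_ (Prod.ext ?_ ?_) <;>
      simp [Prod.smul_fst, Prod.smul_snd, zsmul_eq_mul] <;> push_cast <;> ring

lemma ker_phi3 (a s : ℕ) (t s' : ℤ) (hs' : s' = (s : ℤ)) :
    LinearMap.ker (phi3 a (a * s) t) =
      span ℤ ({(a : ℤ) • ![1, 0, 0], (a : ℤ) • ![2, 0, 0], (a : ℤ) • ![0, 1, t],
        (a : ℤ) • ![0, 0, s']} : Set (Fin 3 → ℤ)) := by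
  subst hs'
  apply le_antisymm
  · intro v hv
    rw [LinearMap.mem_ker] at hv
    rw [Prod.ext_iff, Prod.ext_iff] at hv
    obtain ⟨h0, h1, h2⟩ := hv
    simp only [phi3, LinearMap.coe_mk, AddHom.coe_mk, Prod.fst_zero, Prod.snd_zero] at h0 h1 h2
    rw [ZMod.intCast_zmod_eq_zero_iff_dvd] at h0 h1 h2
    obtain ⟨c0, hc0⟩ := h0
    obtain ⟨c1, hc1⟩ := h1
    obtain ⟨c2, hc2⟩ := h2
    push_cast at hc2
    have hv3 : v = c0 • ((a : ℤ) • ![1, 0, 0]) + c1 • ((a : ℤ) • ![0, 1, t])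
        + c2 • ((a : ℤ) • ![0, 0, (s : ℤ)]) := by
      funext i
      fin_cases i
      · show v 0 = _
        simp
        linear_combination hc0
      · show v 1 = _
        simp
        linear_combination hc1
      · show v 2 = _
        simp
        linear_combination hc2 + t * hc1
    rw [hv3]
    refine add_mem (add_mem ?_ ?_) ?_ <;>
      exact smul_mem _ _ (subset_span (by simp))
  · rw [span_le]
    rintro z (rfl | rfl | rfl | rfl) <;>
    · simp only [SetLike.mem_coe, LinearMap.mem_ker, phi3, LinearMap.coe_mk, AddHom.coe_mk,
        Pi.smul_apply, smul_eq_mul, Matrix.cons_val_zero, Matrix.cons_val_one, Matrix.head_cons,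
        Matrix.cons_val_two, Matrix.tail_cons, Prod.ext_iff, Prod.fst_zero, Prod.snd_zero]
      refine ⟨?_, ?_, ?_⟩ <;>
      · rw [ZMod.intCast_zmod_eq_zero_iff_dvd] <;> push_cast <;> ring_nf
        first
        | exact dvd_refl _
        | exact dvd_zero _
        | exact Dvd.intro _ rfl
        | (push_cast; ring_nf; first | exact dvd_refl _ | exact dvd_zero _ | exact Dvd.intro _ rfl)

end aux

theorem stmt14 (n : ℕ) (hn : 4 ≤ n) (hne : Even n) (k : ℤ) :
    Nat.card
      (Submodule.span ℤ
        ({Submodule.Quotient.mk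
            ((k * ((n - 2).factorial : ℤ)) • (![1, 0, 0] : Fin 3 → ℤ)),
          Submodule.Quotient.mk
            ((k * ((n - 2).factorial : ℤ)) • (![0, 0, (n : ℤ) - 1] : Fin 3 → ℤ))} :
          Set ((Fin 3 → ℤ) ⧸
            Submodule.span ℤ
              ({((n * (n - 1) / 2 * (n - 2).factorial : ℕ) : ℤ) • ![1, 0, 0],
                ((n * (n - 1) / 2 * (n - 2).factorial : ℕ) : ℤ) • ![2, 0, 0],
                ((n * (n - 1) / 2 * (n - 2).factorial : ℕ) : ℤ) • ![0, 1, (n : ℤ) + 1],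
                ((n * (n - 1) / 2 * (n - 2).factorial : ℕ) : ℤ) •
                  ![0, 0, 2 * (n : ℤ) + 2]} : Set (Fin 3 → ℤ))))) =
      n * (n - 1) / 2 / Int.gcd ((n * (n - 1) / 2 : ℕ) : ℤ) k *
        (n * (n + 1) / Int.gcd ((n * (n + 1) : ℕ) : ℤ) k) := by
  have h2 : (2 : ℕ) ∣ n * (n - 1) := Dvd.dvd.mul_right hne.two_dvd _
  have hF : 0 < (n - 2).factorial := Nat.factorial_pos _
  have hM : 0 < n * (n - 1) / 2 := Nat.div_pos (by
    have h3 : 3 ≤ n - 1 := by omega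
    calc (2:ℕ) ≤ 4 * 3 := by norm_num
      _ ≤ n * (n - 1) := Nat.mul_le_mul hn h3) (by norm_num)
  set F := (n - 2).factorial with hFdef
  set N := n * (n - 1) / 2 * F with hNdef
  have hN0 : N ≠ 0 := by positivity
  have hB0 : N * (2 * n + 2) ≠ 0 := by positivity
  have hker :
      Submodule.span ℤ
        ({((N : ℕ) : ℤ) • ![1, 0, 0], ((N : ℕ) : ℤ) • ![2, 0, 0],
          ((N : ℕ) : ℤ) • ![0, 1, (n : ℤ) + 1],
          ((N : ℕ) : ℤ) • ![0, 0, 2 * (n : ℤ) + 2]} : Set (Fin 3 → ℤ)) =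
      LinearMap.ker (phi3 N (N * (2 * n + 2)) ((n : ℤ) + 1)) :=
    (ker_phi3 N (2 * n + 2) ((n : ℤ) + 1) (2 * (n : ℤ) + 2) (by push_cast; ring)).symm
  set SS : Submodule ℤ (Fin 3 → ℤ) :=
    Submodule.span ℤ
      ({((N : ℕ) : ℤ) • ![1, 0, 0], ((N : ℕ) : ℤ) • ![2, 0, 0],
        ((N : ℕ) : ℤ) • ![0, 1, (n : ℤ) + 1],
        ((N : ℕ) : ℤ) • ![0, 0, 2 * (n : ℤ) + 2]} : Set (Fin 3 → ℤ)) with hSS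
  set ψ : ((Fin 3 → ℤ) ⧸ SS) →ₗ[ℤ] ZMod N × ZMod N × ZMod (N * (2 * n + 2)) :=
    SS.liftQ (phi3 N (N * (2 * n + 2)) ((n : ℤ) + 1)) hker.le with hψ
  have hinj : Function.Injective ψ := by
    rw [← LinearMap.ker_eq_bot]
    exact Submodule.ker_liftQ_eq_bot _ _ _ hker.ge
  rw [Nat.card_congr (Submodule.equivMapOfInjective ψ hinj _).toEquiv]
  rw [Submodule.map_span, Set.image_insert_eq, Set.image_singleton]
  rw [hψ, Submodule.liftQ_apply, Submodule.liftQ_apply]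
  have hA : phi3 N (N * (2 * n + 2)) ((n : ℤ) + 1)
      ((k * (F : ℤ)) • (![1, 0, 0] : Fin 3 → ℤ)) =
      (((k * (F : ℤ) : ℤ) : ZMod N), (0 : ZMod N × ZMod (N * (2 * n + 2)))) := by
    simp [phi3, Prod.ext_iff]
  have hB : phi3 N (N * (2 * n + 2)) ((n : ℤ) + 1)
      ((k * (F : ℤ)) • (![0, 0, (n : ℤ) - 1] : Fin 3 → ℤ)) =
      ((0 : ZMod N),
        (((0 : ZMod N), ((k * (F : ℤ) * ((n : ℤ) - 1) : ℤ) : ZMod (N * (2 * n + 2)))) :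
          ZMod N × ZMod (N * (2 * n + 2)))) := by
    simp [phi3, Prod.ext_iff]
  rw [hA, hB, card_span_pair', Prod.addOrderOf, addOrderOf_zero, Nat.lcm_one_left]
  rw [addOrderOf_intCast_zmod N hN0, addOrderOf_intCast_zmod _ hB0]
  -- arithmetic
  have e1 : (k * (F : ℤ)).natAbs = k.natAbs * F := by
    rw [Int.natAbs_mul, Int.natAbs_natCast]
  have hn1 : ((n : ℤ) - 1) = ((n - 1 : ℕ) : ℤ) := by omega
  have e2 : (k * (F : ℤ) * ((n : ℤ) - 1)).natAbs = k.natAbs * ((n - 1) * F) := by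
    rw [hn1, Int.natAbs_mul, Int.natAbs_mul, Int.natAbs_natCast, Int.natAbs_natCast]
    ring
  have e3 : ∀ a : ℕ, Int.gcd ((a : ℕ) : ℤ) k = a.gcd k.natAbs := by
    intro a; simp [Int.gcd, Int.natAbs_natCast]
  rw [e1, e2, e3, e3]
  have hM2 : n * (n - 1) / 2 * 2 = n * (n - 1) := Nat.div_mul_cancel h2
  have key : N * (2 * n + 2) = n * (n + 1) * ((n - 1) * F) := by
    rw [hNdef]
    calc n * (n - 1) / 2 * F * (2 * n + 2) = n * (n - 1) / 2 * 2 * ((n + 1) * F) := by ring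
      _ = n * (n - 1) * ((n + 1) * F) := by rw [hM2]
      _ = n * (n + 1) * ((n - 1) * F) := by ring
  have f1 : N / N.gcd (k.natAbs * F) = n * (n - 1) / 2 / (n * (n - 1) / 2).gcd k.natAbs := by
    rw [hNdef, Nat.gcd_mul_right, Nat.mul_div_mul_right _ _ hF]
  have f2 : N * (2 * n + 2) / (N * (2 * n + 2)).gcd (k.natAbs * ((n - 1) * F)) =
      n * (n + 1) / (n * (n + 1)).gcd k.natAbs := by
    rw [key, Nat.gcd_mul_right, Nat.mul_div_mul_right]
    have : 0 < n - 1 := by omega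
    positivity
  rw [f1, f2]
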